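/- For n ≥ 1, define the n-th Legendre polynomial via Rodrigues' formula, Pₙ(x) = (1/(2ⁿ n!)) · dⁿ/dxⁿ (x² − 1)ⁿ. Then for every n times continuously differentiable f : ℝ → ℝ and every x₀ ∈ ℝ, the limit as h → 0⁺ of ((2n+1)! / (2^{n+1} · n! · hⁿ)) · ∫_{-1}^{1} Pₙ(t) f(x₀ + h t) dt exists and equals f⁽ⁿ⁾(x₀). -/

import Mathlib

open Filter Topology intervalIntegral
open Set Polynomial

/- iterated derivative of polynomial eval -/
lemma iteratedDeriv_polyeval (p : ℝ[X]) (k : ℕ) :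
    iteratedDeriv k (fun x : ℝ => p.eval x) = fun x => (derivative^[k] p).eval x := by
  induction k with
  | zero => simp
  | succ k ih =>
    rw [iteratedDeriv_succ, ih]
    funext x
    rw [Function.iterate_succ_apply', Polynomial.deriv]

/- derivatives of (x²-1)ⁿ vanish at ±1 up to order n-1 -/
lemma vanish_at (n k : ℕ) (hk : k < n) (s : ℝ) (hs : s = 1 ∨ s = -1) :
    iteratedDeriv k (fun y : ℝ => (y ^ 2 - 1) ^ n) s = 0 := by
  have hfun : (fun y : ℝ => (y ^ 2 - 1) ^ n)
      = fun x => (((X : ℝ[X]) ^ 2 - 1) ^ n).eval x := by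
    funext y; simp
  rw [hfun, iteratedDeriv_polyeval]
  have hne : ((X : ℝ[X]) ^ 2 - 1) ^ n ≠ 0 := by
    intro h
    have := congrArg (fun q => Polynomial.eval (0:ℝ) q) h
    simp at this
  have hdvd : (X - C s) ^ n ∣ ((X : ℝ[X]) ^ 2 - 1) ^ n := by
    apply pow_dvd_pow_of_dvd
    rcases hs with h | h <;> subst h
    · exact ⟨X + 1, by rw [Polynomial.C_1]; ring⟩
    · exact ⟨X - 1, by rw [show Polynomial.C (-1:ℝ) = -1 by simp]; ring⟩
  have hlt : k < rootMultiplicity s (((X : ℝ[X]) ^ 2 - 1) ^ n) :=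
    lt_of_lt_of_le hk ((Polynomial.le_rootMultiplicity_iff hne).mpr hdvd)
  exact Polynomial.isRoot_iterate_derivative_of_lt_rootMultiplicity hlt

/- value of ∫ (1-t²)ⁿ -/
lemma legJ (n : ℕ) :
    ((2 * n + 1).factorial : ℝ) * ∫ t in (-1:ℝ)..1, (1 - t ^ 2) ^ n
      = 2 ^ (2 * n + 1) * (n.factorial : ℝ) ^ 2 := by
  induction n with
  | zero => norm_num
  | succ n ih =>
    have hcont : ∀ m : ℕ, Continuous (fun t : ℝ => (1 - t ^ 2) ^ m) := fun m =>
      ((continuous_const.sub (continuous_pow 2)).pow m)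
    have key : ((2 * n + 3 : ℝ)) * (∫ t in (-1:ℝ)..1, (1 - t ^ 2) ^ (n+1))
        = (2 * n + 2) * ∫ t in (-1:ℝ)..1, (1 - t ^ 2) ^ n := by
      have hF : ∀ t : ℝ, HasDerivAt (fun t : ℝ => t * (1 - t ^ 2) ^ (n + 1))
          ((2 * n + 3) * (1 - t ^ 2) ^ (n+1) - (2 * n + 2) * (1 - t ^ 2) ^ n) t := by
        intro t
        have h1 : HasDerivAt (fun t : ℝ => (1 - t ^ 2) ^ (n + 1))
            (((n : ℝ) + 1) * (1 - t ^ 2) ^ n * (-(2 * t))) t := by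
          have h0 : HasDerivAt (fun t : ℝ => 1 - t ^ 2) (-(2 * t)) t := by
            simpa using ((hasDerivAt_pow 2 t).const_sub 1)
          simpa [Nat.add_sub_cancel] using h0.fun_pow (n + 1)
        have := (hasDerivAt_id t).fun_mul h1
        refine this.congr_deriv ?_
        simp only [id_eq]
        rw [pow_succ]
        ring
      have hint : ∫ t in (-1:ℝ)..1,
          ((2 * n + 3) * (1 - t ^ 2) ^ (n+1) - (2 * n + 2) * (1 - t ^ 2) ^ n)
          = (1:ℝ) * (1 - 1 ^ 2) ^ (n+1) - (-1) * (1 - (-1) ^ 2) ^ (n+1) := by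
        exact intervalIntegral.integral_deriv_eq_sub'
          _ (funext fun t => (hF t).deriv) (fun t _ => (hF t).differentiableAt)
          (((continuous_const.mul (hcont (n+1))).sub
            (continuous_const.mul (hcont n))).continuousOn)
      rw [intervalIntegral.integral_sub
          ((continuous_const.fun_mul (hcont (n+1))).intervalIntegrable _ _)
          ((continuous_const.fun_mul (hcont n)).intervalIntegrable _ _),
        intervalIntegral.integral_const_mul, intervalIntegral.integral_const_mul] at hint
      have : (1:ℝ) * (1 - 1 ^ 2) ^ (n+1) - (-1) * (1 - (-1) ^ 2) ^ (n+1) = 0 := by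
        norm_num
      rw [this] at hint
      linarith
    have hfac : ((2 * (n+1) + 1).factorial : ℝ)
        = (2 * n + 3) * (2 * n + 2) * ((2 * n + 1).factorial : ℝ) := by
      have : 2 * (n + 1) + 1 = (2 * n + 2) + 1 := by ring
      rw [this]
      rw [Nat.factorial_succ, Nat.factorial_succ]
      push_cast
      ring
    rw [hfac]
    have : ((2*n+3 : ℝ)) * (2*n+2) * ((2 * n + 1).factorial : ℝ)
          * ∫ t in (-1:ℝ)..1, (1 - t ^ 2) ^ (n+1)
        = (2*n+2) * ((2 * n + 1).factorial : ℝ)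
          * ((2*n+3) * ∫ t in (-1:ℝ)..1, (1 - t ^ 2) ^ (n+1)) := by ring
    rw [this, key]
    have hfac2 : (((n+1).factorial : ℝ)) = (n + 1) * (n.factorial : ℝ) := by
      push_cast [Nat.factorial_succ]; ring
    rw [hfac2]
    rw [show ((2*n+2:ℝ)) * ((2 * n + 1).factorial : ℝ) * ((2*n+2) * ∫ t in (-1:ℝ)..1, (1 - t ^ 2) ^ n)
        = (2*n+2)^2 * (((2 * n + 1).factorial : ℝ) * ∫ t in (-1:ℝ)..1, (1 - t ^ 2) ^ n) by ring,
      ih]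
    rw [show 2*(n+1)+1 = (2*n+1)+2 by ring]
    rw [pow_add]
    ring

/- iterated integration by parts on [-1,1] -/
lemma parts (u : ℝ → ℝ)
    (hU : ∀ k, Continuous (iteratedDeriv k u))
    (hUd : ∀ (k : ℕ) (x : ℝ), HasDerivAt (iteratedDeriv k u) (iteratedDeriv (k+1) u x) x) :
    ∀ (m : ℕ) (g : ℝ → ℝ), ContDiff ℝ (m : ℕ∞) g →
    (∀ k < m, iteratedDeriv k u 1 = 0 ∧ iteratedDeriv k u (-1) = 0) →
    ∫ t in (-1:ℝ)..1, iteratedDeriv m u t * g t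
      = (-1:ℝ)^m * ∫ t in (-1:ℝ)..1, u t * iteratedDeriv m g t := by
  intro m
  induction m with
  | zero => intro g _ _; simp
  | succ m ih =>
    intro g hg hvan
    have hg' : ContDiff ℝ ((m : WithTop ℕ∞) + 1) g := by exact_mod_cast hg
    have hg1 : Differentiable ℝ g := hg'.differentiable (by simp)
    have hgd : ContDiff ℝ (m : ℕ∞) (deriv g) := by
      exact_mod_cast (contDiff_succ_iff_deriv.mp hg').2.2
    have hderivg_cont : Continuous (deriv g) := hg'.continuous_deriv le_add_self
    have hparts := intervalIntegral.integral_mul_deriv_eq_deriv_mul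
      (u := g) (v := iteratedDeriv m u) (u' := deriv g) (v' := iteratedDeriv (m+1) u)
      (a := (-1:ℝ)) (b := 1)
      (fun x _ => (hg1 x).hasDerivAt)
      (fun x _ => hUd m x)
      (hderivg_cont.intervalIntegrable _ _)
      ((hU (m+1)).intervalIntegrable _ _)
    rw [(hvan m (lt_add_one m)).1, (hvan m (lt_add_one m)).2] at hparts
    have e1 : ∫ t in (-1:ℝ)..1, iteratedDeriv (m+1) u t * g t
        = ∫ t in (-1:ℝ)..1, g t * iteratedDeriv (m+1) u t := by
      simp_rw [mul_comm]
    have e2 : ∫ t in (-1:ℝ)..1, deriv g t * iteratedDeriv m u t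
        = ∫ t in (-1:ℝ)..1, iteratedDeriv m u t * deriv g t := by
      simp_rw [mul_comm]
    have ihapp := ih (deriv g) hgd (fun k hk => hvan k (hk.trans (lt_add_one m)))
    rw [e1, hparts, e2, ihapp]
    have : iteratedDeriv m (deriv g) = iteratedDeriv (m+1) g := iteratedDeriv_succ'.symm
    rw [this]
    ring

lemma avg_tendsto (n : ℕ) (g : ℝ → ℝ) (hgc : Continuous g) (x₀ : ℝ) :
    Filter.Tendsto (fun h : ℝ => ∫ t in (-1:ℝ)..1, (1 - t^2)^n * g (x₀ + h * t)) (𝓝[>] 0)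
      (𝓝 ((∫ t in (-1:ℝ)..1, (1 - t^2)^n) * g x₀)) := by
  rw [Metric.tendsto_nhdsWithin_nhds]
  intro ε hε
  obtain ⟨δ, hδ, hcd⟩ := Metric.continuous_iff.mp hgc x₀ (ε/3) (by positivity)
  refine ⟨δ, hδ, fun {h} hh hhd => ?_⟩
  have hh0 : 0 < h := hh
  have habs : |h| < δ := by simpa [Real.dist_eq] using hhd
  have hwcont : Continuous (fun t : ℝ => (1 - t^2)^n) :=
    (continuous_const.sub (continuous_pow 2)).pow n
  have hLc : Continuous (fun t : ℝ => (1 - t^2)^n * g (x₀ + h * t)) :=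
    hwcont.mul (hgc.comp (continuous_const.add (continuous_const.mul continuous_id)))
  have hL : (∫ t in (-1:ℝ)..1, (1 - t^2)^n) * g x₀
      = ∫ t in (-1:ℝ)..1, (1 - t^2)^n * g x₀ := by
    rw [intervalIntegral.integral_mul_const]
  rw [Real.dist_eq, hL, ← intervalIntegral.integral_sub
      (hLc.intervalIntegrable _ _)
      ((hwcont.fun_mul continuous_const).intervalIntegrable _ _)]
  have hbound : ∀ t ∈ Set.uIoc (-1:ℝ) 1,
      ‖(1 - t^2)^n * g (x₀ + h * t) - (1 - t^2)^n * g x₀‖ ≤ ε/3 := by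
    intro t ht
    rw [Set.uIoc_of_le (by norm_num : (-1:ℝ) ≤ 1)] at ht
    have ht1 : |t| ≤ 1 := abs_le.mpr ⟨le_of_lt ht.1, ht.2⟩
    have ht2 : t^2 ≤ 1 := by nlinarith [abs_nonneg t, sq_abs t]
    have hw1 : |(1 - t^2)^n| ≤ 1 := by
      rw [abs_pow]
      apply pow_le_one₀ (abs_nonneg _)
      rw [abs_le]
      constructor <;> nlinarith [sq_nonneg t]
    have hgb : |g (x₀ + h * t) - g x₀| ≤ ε/3 := by
      have : dist (x₀ + h * t) x₀ < δ := by
        rw [Real.dist_eq]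
        have : |x₀ + h * t - x₀| = |h| * |t| := by rw [← abs_mul]; ring_nf
        rw [this]
        calc |h| * |t| ≤ |h| * 1 := by
              exact mul_le_mul_of_nonneg_left ht1 (abs_nonneg h)
          _ < δ := by simpa using habs
      exact le_of_lt (by simpa [Real.dist_eq] using hcd _ this)
    calc ‖(1 - t^2)^n * g (x₀ + h * t) - (1 - t^2)^n * g x₀‖
        = |(1 - t^2)^n| * |g (x₀ + h * t) - g x₀| := by
          rw [← mul_sub, Real.norm_eq_abs, abs_mul]
      _ ≤ 1 * (ε/3) := mul_le_mul hw1 hgb (abs_nonneg _) zero_le_one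
      _ = ε/3 := one_mul _
  have := intervalIntegral.norm_integral_le_of_norm_le_const hbound
  rw [Real.norm_eq_abs] at this
  calc |∫ t in (-1:ℝ)..1, ((1 - t^2)^n * g (x₀ + h * t) - (1 - t^2)^n * g x₀)|
      ≤ ε/3 * |1 - (-1:ℝ)| := this
    _ < ε := by rw [show |1 - (-1:ℝ)| = 2 by norm_num]; linarith

/-- Legendre realization of n-th order differentiation by integration: with `Pₙ` defined by
Rodrigues' formula `Pₙ(x) = (1/(2ⁿ n!)) dⁿ/dxⁿ (x²−1)ⁿ`, for every n-times continuously
differentiable `f` and every `x₀`,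
`((2n+1)!/(2^{n+1} n! hⁿ)) ∫_{-1}^{1} Pₙ(t) f(x₀+ht) dt → f⁽ⁿ⁾(x₀)` as `h → 0⁺`. -/
theorem legendre_nth_derivative (n : ℕ) (hn : 1 ≤ n) (P : ℝ → ℝ)
    (hP : ∀ x : ℝ, P x =
      (1 / (2 ^ n * (n.factorial : ℝ))) * iteratedDeriv n (fun y : ℝ => (y ^ 2 - 1) ^ n) x) :
    ∀ f : ℝ → ℝ, ContDiff ℝ (n : ℕ∞) f → ∀ x₀ : ℝ,
      Tendsto (fun h : ℝ =>
          (((2 * n + 1).factorial : ℝ) / (2 ^ (n + 1) * (n.factorial : ℝ) * h ^ n)) *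
            ∫ t in (-1 : ℝ)..1, P t * f (x₀ + h * t))
        (𝓝[>] (0 : ℝ)) (𝓝 (iteratedDeriv n f x₀)) := by
  intro f hf x₀
  set w : ℝ → ℝ := fun y : ℝ => (y ^ 2 - 1) ^ n with hw
  set G : ℝ → ℝ := iteratedDeriv n f with hG
  have hGc : Continuous G := hf.continuous_iteratedDeriv n (by exact_mod_cast le_refl _)
  have hweq : w = fun x : ℝ => (((X : ℝ[X]) ^ 2 - 1) ^ n).eval x := by
    funext y; simp [hw]
  have hU : ∀ k, Continuous (iteratedDeriv k w) := by
    intro k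
    rw [hweq, iteratedDeriv_polyeval]
    exact (Polynomial.continuous _)
  have hUd : ∀ (k : ℕ) (x : ℝ), HasDerivAt (iteratedDeriv k w) (iteratedDeriv (k+1) w x) x := by
    intro k x
    rw [hweq, iteratedDeriv_polyeval, iteratedDeriv_polyeval, Function.iterate_succ_apply']
    exact Polynomial.hasDerivAt _ _
  have hvan : ∀ k < n, iteratedDeriv k w 1 = 0 ∧ iteratedDeriv k w (-1) = 0 :=
    fun k hk => ⟨vanish_at n k hk 1 (Or.inl rfl), vanish_at n k hk (-1) (Or.inr rfl)⟩
  set J : ℝ := ∫ t in (-1:ℝ)..1, (1 - t^2)^n with hJ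
  set c2 : ℝ := ((2 * n + 1).factorial : ℝ) / (2 ^ (2*n+1) * (n.factorial : ℝ)^2) with hc2
  have hfacpos : (0:ℝ) < (n.factorial : ℝ) := by exact_mod_cast n.factorial_pos
  have hfac2pos : (0:ℝ) < ((2*n+1).factorial : ℝ) := by exact_mod_cast (2*n+1).factorial_pos
  -- key identity for h > 0
  have key : ∀ h : ℝ, 0 < h →
      (((2 * n + 1).factorial : ℝ) / (2 ^ (n + 1) * (n.factorial : ℝ) * h ^ n)) *
        ∫ t in (-1 : ℝ)..1, P t * f (x₀ + h * t)
      = c2 * ∫ t in (-1:ℝ)..1, (1 - t^2)^n * G (x₀ + h * t) := by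
    intro h hh
    set g : ℝ → ℝ := fun t => f (x₀ + h * t) with hg
    have hgC : ContDiff ℝ (n : ℕ∞) g :=
      hf.comp (contDiff_const.add (contDiff_const.mul contDiff_id))
    have e1 : (∫ t in (-1 : ℝ)..1, P t * f (x₀ + h * t))
        = (1 / (2 ^ n * (n.factorial : ℝ))) * ∫ t in (-1:ℝ)..1, iteratedDeriv n w t * g t := by
      rw [← intervalIntegral.integral_const_mul]
      apply intervalIntegral.integral_congr
      intro t _
      show P t * f (x₀ + h * t) = 1 / (2 ^ n * (n.factorial:ℝ)) * (iteratedDeriv n w t * g t)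
      rw [hP t]
      ring
    have e2 := parts w hU hUd n g hgC hvan
    have hF2 : ContDiff ℝ (n : ℕ∞) (fun z : ℝ => f (x₀ + z)) :=
      hf.comp (contDiff_const.add contDiff_id)
    have e3 : iteratedDeriv n g = fun t => h ^ n * G (x₀ + h * t) := by
      have h1 : iteratedDeriv n (fun t : ℝ => (fun z => f (x₀ + z)) (h * t))
          = fun t => h ^ n * iteratedDeriv n (fun z => f (x₀ + z)) (h * t) :=
        iteratedDeriv_comp_const_mul hF2 h
      have h2 : iteratedDeriv n (fun z : ℝ => f (x₀ + z)) = fun t => iteratedDeriv n f (x₀ + t) :=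
        iteratedDeriv_comp_const_add n f x₀
      calc iteratedDeriv n g = iteratedDeriv n (fun t : ℝ => (fun z => f (x₀ + z)) (h * t)) := rfl
        _ = fun t => h ^ n * iteratedDeriv n (fun z => f (x₀ + z)) (h * t) := h1
        _ = fun t => h ^ n * G (x₀ + h * t) := by funext t; rw [h2]
    have e4 : (∫ t in (-1:ℝ)..1, w t * iteratedDeriv n g t)
        = (-1:ℝ)^n * h^n * ∫ t in (-1:ℝ)..1, (1 - t^2)^n * G (x₀ + h * t) := by
      rw [← intervalIntegral.integral_const_mul]
      apply intervalIntegral.integral_congr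
      intro t _
      have hwt : w t = (-1:ℝ)^n * (1 - t^2)^n := by
        show ((t:ℝ)^2 - 1)^n = _
        rw [show ((t:ℝ)^2 - 1) = (-1) * (1 - t^2) by ring, mul_pow]
      show w t * iteratedDeriv n g t = (-1:ℝ)^n * h^n * ((1 - t^2)^n * G (x₀ + h * t))
      rw [e3, hwt]
      ring
    rw [e1, e2, e4]
    have hpow : (h:ℝ)^n ≠ 0 := pow_ne_zero n (ne_of_gt hh)
    have hsq : ((-1:ℝ)^n) * ((-1:ℝ)^n) = 1 := by
      rw [← mul_pow]; norm_num
    have h2pow : (2:ℝ) ^ (2*n+1) = 2 ^ (n+1) * 2 ^ n := by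
      rw [← pow_add]; ring_nf
    set A : ℝ := ∫ t in (-1:ℝ)..1, (1 - t^2)^n * G (x₀ + h * t) with hA
    have hsgn : (-1:ℝ)^n * ((-1:ℝ)^n * h^n * A) = h^n * A := by
      rw [show (-1:ℝ)^n * ((-1:ℝ)^n * h^n * A) = ((-1:ℝ)^n * (-1:ℝ)^n) * (h^n * A) by ring,
        hsq, one_mul]
    rw [hsgn, hc2, h2pow]
    field_simp
  -- the limit
  have havg := (avg_tendsto n G hGc x₀).const_mul c2
  have hval : c2 * (J * G x₀) = G x₀ := by
    have hJval : ((2 * n + 1).factorial : ℝ) * J = 2 ^ (2*n+1) * (n.factorial : ℝ)^2 := legJ n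
    have h2 : (2:ℝ)^(2*n+1) * (n.factorial:ℝ)^2 ≠ 0 := by positivity
    calc c2 * (J * G x₀)
        = (((2*n+1).factorial:ℝ) * J) * G x₀ / (2^(2*n+1) * (n.factorial:ℝ)^2) := by
          rw [hc2]; ring
      _ = G x₀ := by rw [hJval]; field_simp
  rw [show (𝓝 (G x₀)) = 𝓝 (c2 * (J * G x₀)) by rw [hval]]
  apply Filter.Tendsto.congr' _ havg
  filter_upwards [self_mem_nhdsWithin] with h hh
  exact (key h hh).symm
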